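/- Let $A = \bigoplus_{i \in \mathbb{Z}/p^r} A_i$ be a commutative ring graded by $\mathbb{Z}/p^r$ ($p$ prime, $r \geq 1$), let $K$ be a field, and let $f : A \to K$ be a ring homomorphism. Let $H^*$ be a nontrivial subgroup of $\mathbb{Z}/p^r$, and suppose that $f$ vanishes on $A_j$ for every $j \in H^* \setminus \{0\}$. Then $f$ vanishes on $A_i$ for every $i \in \mathbb{Z}/p^r \setminus \{0\}$. -/
import Mathlib

/-- Any nonzero element of `ZMod (p ^ r)` has `p ^ (r - 1)` among its multiples. -/
lemma aux_nsmul_eq (p r : ℕ) (hp : p.Prime) (hr : 1 ≤ r)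
    (x : ZMod (p ^ r)) (hx : x ≠ 0) :
    ∃ n : ℕ, n • x = ((p : ZMod (p ^ r)) ^ (r - 1)) := by
  have hpr : 0 < p ^ r := pow_pos hp.pos r
  haveI : NeZero (p ^ r) := ⟨hpr.ne'⟩
  set v := x.val with hv
  have hv0 : v ≠ 0 := by
    intro h
    apply hx
    have := ZMod.natCast_zmod_val x
    rw [← this, ← hv, h]; simp
  set k := v.factorization p with hk
  have hkdvd : p ^ k ∣ v := Nat.ordProj_dvd v p
  obtain ⟨m, hm⟩ := hkdvd
  have hpm : ¬ p ∣ m := by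
    intro hdvd
    have : p ^ (k + 1) ∣ v := by
      obtain ⟨c, hc⟩ := hdvd
      exact ⟨c, by rw [hm, hc]; ring⟩
    exact Nat.pow_succ_factorization_not_dvd hv0 hp this
  have hkr : k ≤ r - 1 := by
    by_contra hlt
    push_neg at hlt
    have : p ^ r ∣ v := dvd_trans (pow_dvd_pow p (by omega)) ⟨m, hm⟩
    have hvlt : v < p ^ r := ZMod.val_lt x
    exact absurd (Nat.le_of_dvd (Nat.pos_of_ne_zero hv0) this) (by omega)
  have hcop : m.Coprime (p ^ r) :=
    Nat.Coprime.pow_right r ((Nat.Prime.coprime_iff_not_dvd hp).mpr hpm).symm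
  have hunit : IsUnit (m : ZMod (p ^ r)) := (ZMod.isUnit_iff_coprime m (p ^ r)).mpr hcop
  obtain ⟨u, hu⟩ := hunit
  set z : ZMod (p ^ r) := (p : ZMod (p ^ r)) ^ (r - 1 - k) * (↑u⁻¹ : ZMod (p ^ r)) with hz
  refine ⟨z.val, ?_⟩
  have hx' : x = (v : ZMod (p ^ r)) := (ZMod.natCast_zmod_val x).symm
  have hzx : z * x = (p : ZMod (p ^ r)) ^ (r - 1) := by
    rw [hx', hm]
    push_cast
    rw [hz]
    have : ((u⁻¹ : (ZMod (p ^ r))ˣ) : ZMod (p ^ r)) * (m : ZMod (p ^ r)) = 1 := by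
      rw [← hu]; exact u.inv_mul
    calc (p : ZMod (p ^ r)) ^ (r - 1 - k) * ↑u⁻¹ * ((p : ZMod (p ^ r)) ^ k * m)
        = (p : ZMod (p ^ r)) ^ (r - 1 - k) * (p : ZMod (p ^ r)) ^ k * ((↑u⁻¹ : ZMod (p ^ r)) * m) := by ring
      _ = (p : ZMod (p ^ r)) ^ (r - 1) := by
          rw [this, mul_one, ← pow_add]
          congr 1
          omega
  rw [nsmul_eq_mul, ZMod.natCast_zmod_val]
  exact hzx

lemma aux_p_pow_ne (p r : ℕ) (hp : p.Prime) (hr : 1 ≤ r) :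
    ((p : ZMod (p ^ r)) ^ (r - 1)) ≠ 0 := by
  rw [← Nat.cast_pow]
  intro h0
  rw [ZMod.natCast_eq_zero_iff] at h0
  have hdvd := h0
  have := Nat.le_of_dvd (pow_pos hp.pos _) hdvd
  exact absurd (Nat.pow_le_pow_iff_right hp.one_lt |>.mp this) (by omega)

/-- If a ring homomorphism from a `ZMod (p ^ r)`-graded commutative ring to a field
vanishes on the homogeneous components of nonzero degrees belonging to a nontrivial
subgroup, then it vanishes on all homogeneous components of nonzero degree. -/
theorem stmt3 (p r : ℕ) (hp : p.Prime) (hr : 1 ≤ r)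
    (A : Type*) [CommRing A] (𝒜 : ZMod (p ^ r) → AddSubgroup A) [GradedRing 𝒜]
    (K : Type*) [Field K] (f : A →+* K)
    (H : AddSubgroup (ZMod (p ^ r))) (hHne : H ≠ ⊥)
    (hf : ∀ j ∈ H, j ≠ 0 → ∀ a ∈ 𝒜 j, f a = 0) :
    ∀ i : ZMod (p ^ r), i ≠ 0 → ∀ a ∈ 𝒜 i, f a = 0 := by
  have hPne := aux_p_pow_ne p r hp hr
  -- `p ^ (r - 1)` lies in `H`
  obtain ⟨h, hhH, hh0⟩ : ∃ h ∈ H, h ≠ 0 := by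
    by_contra hcon
    push_neg at hcon
    exact hHne (by ext x; simp [AddSubgroup.mem_bot]; exact ⟨fun hx => hcon x hx, fun hx => hx ▸ H.zero_mem⟩)
  obtain ⟨n₀, hn₀⟩ := aux_nsmul_eq p r hp hr h hh0
  have hPH : ((p : ZMod (p ^ r)) ^ (r - 1)) ∈ H := hn₀ ▸ H.nsmul_mem hhH n₀
  intro i hi a ha
  obtain ⟨n, hn⟩ := aux_nsmul_eq p r hp hr i hi
  have hn0 : n ≠ 0 := by
    rintro rfl
    simp at hn
    exact hPne hn.symm
  have hpow : a ^ n ∈ 𝒜 (n • i) := SetLike.pow_mem_graded n ha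
  have : f (a ^ n) = 0 := hf (n • i) (hn ▸ hPH) (hn ▸ hPne) _ hpow
  rw [map_pow] at this
  exact pow_eq_zero_iff hn0 |>.mp this
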